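/- Theorem E.1 (characterization of the uniform linear-in-means model with variable group sizes): A dataset {p^N}_{N∈𝒩} is consistent with the uniform linear-in-means model if and only if it satisfies cyclic constancy* (for every cycle (i_k, j_k, N_k)_{k=1}^K, Σ_{k=1}^K (1+|N_k|)(p_{i_k}^{N_k} − p_{j_k}^{N_k}) = 0), symmetric peer effects* (for all N, M ∈ 𝒩 with i ∈ N ∩ M, p_i^N − Σ_{j∈N∖M}(p_j^N − p_i^N) = p_i^M − Σ_{k∈M∖N}(p_k^M − p_i^M) − ((|N|−|M|)/(1+|N|))·Σ_{l∈N∩M}(p_l^M − p_i^M)), and bounded total peer effects (for all N ∈ 𝒩 and i ∈ N, p_i^N ≥ Σ_{j∈N∖{i}}(p_j^N − p_i^N) coordinatewise). -/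

import Mathlib

open Finset
open scoped Classical

noncomputable section

/-- The simplex Δ(X) of probability vectors on a finite set X. -/
def simplex (X : Type*) [Fintype X] : Set (X → ℝ) :=
  {v | (∀ x, 0 ≤ v x) ∧ (∑ x, v x) = 1}

/-- Consistency with the uniform linear-in-means model (ULM). -/
def ULMConsistent {X A : Type*} [Fintype X] [DecidableEq A]
    (𝒩 : Finset (Finset A)) (p : Finset A → A → X → ℝ) : Prop :=
  ∃ v : A → X → ℝ, (∀ i, v i ∈ simplex X) ∧
    ∀ N ∈ 𝒩, ∀ i ∈ N,
      p N i = ((N.card : ℝ))⁻¹ • v i + ∑ j ∈ N.erase i, ((N.card : ℝ))⁻¹ • p N j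

/-- Cyclic constancy*: size-weighted peer effects sum to zero around every cycle of
influence. -/
def CyclicallyConstantStar {X A : Type*} [Fintype X]
    (𝒩 : Finset (Finset A)) (p : Finset A → A → X → ℝ) : Prop :=
  ∀ (K : ℕ) (ii jj : Fin (K + 1) → A) (Ns : Fin (K + 1) → Finset A),
    (∀ k, Ns k ∈ 𝒩) → (∀ k, ii k ∈ Ns k) → (∀ k, jj k ∈ Ns k) →
    (∀ k, jj k = ii (k + 1)) →
    (∑ k, ((1 : ℝ) + (Ns k).card) • (p (Ns k) (ii k) - p (Ns k) (jj k))) = 0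

/-- Symmetric peer effects*. -/
def SymmetricPeerEffectsStar {X A : Type*} [Fintype X] [DecidableEq A]
    (𝒩 : Finset (Finset A)) (p : Finset A → A → X → ℝ) : Prop :=
  ∀ N ∈ 𝒩, ∀ M ∈ 𝒩, ∀ i : A, i ∈ N → i ∈ M →
    p N i - ∑ j ∈ N \ M, (p N j - p N i) =
      p M i - ∑ k ∈ M \ N, (p M k - p M i) -
        (((N.card : ℝ) - M.card) / (1 + N.card)) • ∑ l ∈ N ∩ M, (p M l - p M i)

/-- Bounded total peer effects. -/
def BoundedTotalPeerEffects {X A : Type*} [Fintype X] [DecidableEq A]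
    (𝒩 : Finset (Finset A)) (p : Finset A → A → X → ℝ) : Prop :=
  ∀ N ∈ 𝒩, ∀ i ∈ N, ∀ x : X, (∑ j ∈ N.erase i, (p N j x - p N i x)) ≤ p N i x

/-- Theorem E.1: characterization of the uniform linear-in-means model with variable
group sizes. -/
theorem ulm_characterization_variable_sizes
    {X A : Type*} [Fintype X] [Fintype A] [DecidableEq A]
    (hX : 2 ≤ Fintype.card X) (hA : 2 ≤ Fintype.card A)
    (𝒩 : Finset (Finset A)) (h𝒩 : 𝒩.Nonempty) (h𝒩' : ∀ N ∈ 𝒩, N.Nonempty)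
    (p : Finset A → A → X → ℝ) (hp : ∀ N ∈ 𝒩, ∀ i ∈ N, p N i ∈ simplex X) :
    ULMConsistent 𝒩 p ↔
      CyclicallyConstantStar 𝒩 p ∧ SymmetricPeerEffectsStar 𝒩 p ∧
        BoundedTotalPeerEffects 𝒩 p := by
  constructor
  · rintro ⟨v, hv, hvp⟩
    have step1 : ∀ N ∈ 𝒩, ∀ i ∈ N, ∀ x, ((N.card : ℝ) + 1) * p N i x
        = v i x + ∑ j ∈ N, p N j x := by
      intro N hN i hi x
      have hn : ((N.card : ℝ)) ≠ 0 := Nat.cast_ne_zero.mpr (h𝒩' N hN).card_pos.ne'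
      have h := congrFun (hvp N hN i hi) x
      simp only [Pi.add_apply, Finset.sum_apply, Pi.smul_apply, smul_eq_mul] at h
      rw [← Finset.mul_sum, Finset.sum_erase_eq_sub hi] at h
      field_simp at h
      linear_combination h
    have step2 : ∀ N ∈ 𝒩, ∀ x, ∑ j ∈ N, p N j x = ∑ j ∈ N, v j x := by
      intro N hN x
      have h1 : ∑ i ∈ N, (((N.card : ℝ) + 1) * p N i x)
          = ∑ i ∈ N, (v i x + ∑ j ∈ N, p N j x) :=
        Finset.sum_congr rfl (fun i hi => step1 N hN i hi x)
      rw [← Finset.mul_sum, Finset.sum_add_distrib, Finset.sum_const, nsmul_eq_mul] at h1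
      linear_combination h1
    have key : ∀ N ∈ 𝒩, ∀ i ∈ N, ∀ x, ((N.card : ℝ) + 1) * p N i x
        = v i x + ∑ j ∈ N, v j x := by
      intro N hN i hi x
      rw [step1 N hN i hi x, step2 N hN x]
    refine ⟨?_, ?_, ?_⟩
    · -- cyclic constancy*
      intro K ii jj Ns hNs hii hjj hcyc
      have hterm : ∀ k : Fin (K + 1),
          ((1 : ℝ) + (Ns k).card) • (p (Ns k) (ii k) - p (Ns k) (jj k))
            = v (ii k) - v (ii (k + 1)) := by
        intro k
        funext x
        simp only [Pi.smul_apply, Pi.sub_apply, smul_eq_mul, ← hcyc k]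
        linear_combination key (Ns k) (hNs k) (ii k) (hii k) x
          - key (Ns k) (hNs k) (jj k) (hjj k) x
      calc ∑ k, ((1 : ℝ) + (Ns k).card) • (p (Ns k) (ii k) - p (Ns k) (jj k))
          = ∑ k, (v (ii k) - v (ii (k + 1))) := Finset.sum_congr rfl (fun k _ => hterm k)
        _ = ∑ k, v (ii k) - ∑ k, v (ii (k + 1)) := Finset.sum_sub_distrib _ _
        _ = 0 := by
            rw [Fintype.sum_equiv (Equiv.addRight (1 : Fin (K + 1)))
              (fun k => v (ii (k + 1))) (fun k => v (ii k)) (fun k => rfl), sub_self]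
    · -- symmetric peer effects*
      intro N hN M hM i hiN hiM
      have hn1 : ((N.card : ℝ) + 1) ≠ 0 := by positivity
      have hm1 : ((M.card : ℝ) + 1) ≠ 0 := by positivity
      have hn1' : ((1 : ℝ) + (N.card : ℝ)) ≠ 0 := by positivity
      funext x
      simp only [Pi.sub_apply, Pi.smul_apply, Finset.sum_apply, smul_eq_mul]
      have hA : ∑ j ∈ N \ M, (p N j x - p N i x)
          = ∑ j ∈ N \ M, ((v j x - v i x) / ((N.card : ℝ) + 1)) :=
        Finset.sum_congr rfl (fun j hj => by
          have hjN : j ∈ N := (Finset.mem_sdiff.mp hj).1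
          rw [eq_div_iff hn1]
          linear_combination key N hN j hjN x - key N hN i hiN x)
      have hB : ∑ j ∈ M \ N, (p M j x - p M i x)
          = ∑ j ∈ M \ N, ((v j x - v i x) / ((M.card : ℝ) + 1)) :=
        Finset.sum_congr rfl (fun j hj => by
          have hjM : j ∈ M := (Finset.mem_sdiff.mp hj).1
          rw [eq_div_iff hm1]
          linear_combination key M hM j hjM x - key M hM i hiM x)
      have hC : ∑ j ∈ N ∩ M, (p M j x - p M i x)
          = ∑ j ∈ N ∩ M, ((v j x - v i x) / ((M.card : ℝ) + 1)) :=
        Finset.sum_congr rfl (fun j hj => by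
          have hjM : j ∈ M := (Finset.mem_inter.mp hj).2
          rw [eq_div_iff hm1]
          linear_combination key M hM j hjM x - key M hM i hiM x)
      have hpNi : p N i x = (v i x + ∑ j ∈ N, v j x) / ((N.card : ℝ) + 1) := by
        rw [eq_div_iff hn1]
        linear_combination key N hN i hiN x
      have hpMi : p M i x = (v i x + ∑ j ∈ M, v j x) / ((M.card : ℝ) + 1) := by
        rw [eq_div_iff hm1]
        linear_combination key M hM i hiM x
      rw [hA, hB, hC, hpNi, hpMi]
      rw [← Finset.sum_div, ← Finset.sum_div, ← Finset.sum_div]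
      rw [Finset.sum_sub_distrib, Finset.sum_sub_distrib, Finset.sum_sub_distrib]
      simp only [Finset.sum_const, nsmul_eq_mul]
      have hsN : ∑ j ∈ N, v j x = ∑ j ∈ N ∩ M, v j x + ∑ j ∈ N \ M, v j x :=
        (Finset.sum_inter_add_sum_sdiff N M _).symm
      have hsM : ∑ j ∈ M, v j x = ∑ j ∈ N ∩ M, v j x + ∑ j ∈ M \ N, v j x := by
        rw [Finset.inter_comm]
        exact (Finset.sum_inter_add_sum_sdiff M N _).symm
      have hcN : ((N \ M).card : ℝ) = (N.card : ℝ) - ((N ∩ M).card : ℝ) := by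
        have h := Finset.card_sdiff_add_card_inter N M
        have h' : ((N \ M).card : ℝ) + ((N ∩ M).card : ℝ) = (N.card : ℝ) := by
          exact_mod_cast congrArg (Nat.cast : ℕ → ℝ) h
        linarith
      have hcM : ((M \ N).card : ℝ) = (M.card : ℝ) - ((N ∩ M).card : ℝ) := by
        have h := Finset.card_sdiff_add_card_inter M N
        rw [Finset.inter_comm] at h
        have h' : ((M \ N).card : ℝ) + ((N ∩ M).card : ℝ) = (M.card : ℝ) := by
          exact_mod_cast congrArg (Nat.cast : ℕ → ℝ) h
        linarith
      rw [hsN, hsM, hcN, hcM]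
      field_simp
      ring
    · -- bounded total peer effects
      intro N hN i hi x
      have hn1 : (0 : ℝ) < (N.card : ℝ) + 1 := by positivity
      rw [← mul_le_mul_iff_right₀ hn1]
      have hsum : ((N.card : ℝ) + 1) * (∑ j ∈ N.erase i, (p N j x - p N i x))
          = (∑ j ∈ N, v j x) - (N.card : ℝ) * v i x := by
        rw [Finset.mul_sum]
        rw [Finset.sum_congr rfl (fun j hj => by
          have hjN : j ∈ N := Finset.mem_of_mem_erase hj
          show ((N.card : ℝ) + 1) * (p N j x - p N i x) = v j x - v i x
          linear_combination key N hN j hjN x - key N hN i hi x)]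
        rw [Finset.sum_sub_distrib, Finset.sum_erase_eq_sub hi, Finset.sum_const,
          Finset.card_erase_of_mem hi, nsmul_eq_mul,
          Nat.cast_sub (Finset.card_pos.mpr ⟨i, hi⟩)]
        push_cast
        ring
      have hkey := key N hN i hi x
      have hvnn : 0 ≤ ((N.card : ℝ) + 1) * v i x :=
        mul_nonneg (by positivity) ((hv i).1 x)
      linarith
  · rintro ⟨hcc, hspe, hbd⟩
    -- well-definedness of v
    have hwd : ∀ N ∈ 𝒩, ∀ M ∈ 𝒩, ∀ i : A, i ∈ N → i ∈ M → ∀ x : X,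
        ((N.card : ℝ) + 1) * p N i x - ∑ j ∈ N, p N j x
          = ((M.card : ℝ) + 1) * p M i x - ∑ j ∈ M, p M j x := by
      intro N hN M hM i hiN hiM x
      have hn1 : ((1 : ℝ) + (N.card : ℝ)) ≠ 0 := by positivity
      have hcc2 : ∀ j ∈ N ∩ M, ((1 : ℝ) + (N.card : ℝ)) * (p N j x - p N i x)
          = ((1 : ℝ) + (M.card : ℝ)) * (p M j x - p M i x) := by
        intro j hj
        obtain ⟨hjN, hjM⟩ := Finset.mem_inter.mp hj
        have h := hcc 1 ![i, j] ![j, i] ![N, M]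
          (fun k => by fin_cases k <;> simp [hN, hM])
          (fun k => by fin_cases k <;> simp [hiN, hjM])
          (fun k => by fin_cases k <;> simp [hjN, hiM])
          (fun k => by fin_cases k <;> rfl)
        have hx := congrFun h x
        simp only [Fin.sum_univ_succ, Fin.sum_univ_zero, Matrix.cons_val_zero,
          Matrix.cons_val_one, Matrix.head_cons, Matrix.cons_val_succ, Finset.sum_apply,
          Pi.add_apply, Pi.smul_apply, Pi.sub_apply, Pi.zero_apply, smul_eq_mul,
          add_zero] at hx
        linarith [hx]
      have hT : ((1 : ℝ) + (N.card : ℝ)) * (∑ l ∈ N ∩ M, (p N l x - p N i x))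
          = ((1 : ℝ) + (M.card : ℝ)) * (∑ l ∈ N ∩ M, (p M l x - p M i x)) := by
        rw [Finset.mul_sum, Finset.mul_sum]
        exact Finset.sum_congr rfl hcc2
      have hs := congrFun (hspe N hN M hM i hiN hiM) x
      simp only [Pi.sub_apply, Pi.smul_apply, Finset.sum_apply, smul_eq_mul] at hs
      have e1 : ∑ j ∈ N \ M, (p N j x - p N i x)
          = ∑ j ∈ N \ M, p N j x - ((N \ M).card : ℝ) * p N i x := by
        rw [Finset.sum_sub_distrib, Finset.sum_const, nsmul_eq_mul]
      have e2 : ∑ j ∈ M \ N, (p M j x - p M i x)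
          = ∑ j ∈ M \ N, p M j x - ((M \ N).card : ℝ) * p M i x := by
        rw [Finset.sum_sub_distrib, Finset.sum_const, nsmul_eq_mul]
      have e3 : ∑ j ∈ N ∩ M, (p M j x - p M i x)
          = ∑ j ∈ N ∩ M, p M j x - ((N ∩ M).card : ℝ) * p M i x := by
        rw [Finset.sum_sub_distrib, Finset.sum_const, nsmul_eq_mul]
      have e4 : ∑ j ∈ N ∩ M, (p N j x - p N i x)
          = ∑ j ∈ N ∩ M, p N j x - ((N ∩ M).card : ℝ) * p N i x := by
        rw [Finset.sum_sub_distrib, Finset.sum_const, nsmul_eq_mul]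
      rw [e1, e2, e3] at hs
      rw [e4, e3] at hT
      have hq : (((N.card : ℝ) - (M.card : ℝ)) / (1 + (N.card : ℝ))) * ((1 : ℝ) + (N.card : ℝ))
          = (N.card : ℝ) - (M.card : ℝ) := div_mul_cancel₀ _ hn1
      have hsN : (∑ j ∈ N ∩ M, p N j x) + (∑ j ∈ N \ M, p N j x) = ∑ j ∈ N, p N j x :=
        Finset.sum_inter_add_sum_sdiff N M _
      have hsM : (∑ j ∈ N ∩ M, p M j x) + (∑ j ∈ M \ N, p M j x) = ∑ j ∈ M, p M j x := by
        rw [Finset.inter_comm]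
        exact Finset.sum_inter_add_sum_sdiff M N _
      have hcN : ((N \ M).card : ℝ) = (N.card : ℝ) - ((N ∩ M).card : ℝ) := by
        have h := Finset.card_sdiff_add_card_inter N M
        have h' : ((N \ M).card : ℝ) + ((N ∩ M).card : ℝ) = (N.card : ℝ) := by
          exact_mod_cast congrArg (Nat.cast : ℕ → ℝ) h
        linarith
      have hcM : ((M \ N).card : ℝ) = (M.card : ℝ) - ((N ∩ M).card : ℝ) := by
        have h := Finset.card_sdiff_add_card_inter M N
        rw [Finset.inter_comm] at h
        have h' : ((M \ N).card : ℝ) + ((N ∩ M).card : ℝ) = (M.card : ℝ) := by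
          exact_mod_cast congrArg (Nat.cast : ℕ → ℝ) h
        linarith
      have G' : ((1 : ℝ) + (N.card : ℝ)) * (((N.card : ℝ) + 1) * p N i x - ∑ j ∈ N, p N j x)
          = ((1 : ℝ) + (N.card : ℝ)) * (((M.card : ℝ) + 1) * p M i x - ∑ j ∈ M, p M j x) := by
        linear_combination ((1 : ℝ) + (N.card : ℝ)) * hs - hT
          - ((∑ j ∈ N ∩ M, p M j x) - ((N ∩ M).card : ℝ) * p M i x) * hq
          - ((1 : ℝ) + (N.card : ℝ)) * (p N i x) * hcN
          + ((1 : ℝ) + (N.card : ℝ)) * (p M i x) * hcM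
          + ((1 : ℝ) + (N.card : ℝ)) * hsN - ((1 : ℝ) + (N.card : ℝ)) * hsM
      exact mul_left_cancel₀ hn1 G'
    -- candidate v lies in the simplex
    have hW1 : ∀ N ∈ 𝒩, ∀ i ∈ N,
        (fun x => ((N.card : ℝ) + 1) * p N i x - ∑ j ∈ N, p N j x) ∈ simplex X := by
      intro N hN i hi
      refine ⟨?_, ?_⟩
      · intro x
        have hb := hbd N hN i hi x
        have e : ∑ j ∈ N.erase i, (p N j x - p N i x)
            = ∑ j ∈ N, p N j x - (N.card : ℝ) * p N i x := by
          rw [Finset.sum_sub_distrib, Finset.sum_erase_eq_sub hi, Finset.sum_const,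
            Finset.card_erase_of_mem hi, nsmul_eq_mul,
            Nat.cast_sub (Finset.card_pos.mpr ⟨i, hi⟩)]
          push_cast
          ring
        rw [e] at hb
        simp only
        linarith
      · have hpi := (hp N hN i hi).2
        have hall : ∀ j ∈ N, ∑ x, p N j x = 1 := fun j hj => (hp N hN j hj).2
        have h2 : ∑ x, ∑ j ∈ N, p N j x = (N.card : ℝ) := by
          rw [Finset.sum_comm, Finset.sum_congr rfl hall, Finset.sum_const, nsmul_eq_mul,
            mul_one]
        simp only
        rw [Finset.sum_sub_distrib, ← Finset.mul_sum, hpi, h2]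
        ring
    have hex : ∀ i : A, ∃ vi : X → ℝ, vi ∈ simplex X ∧ ∀ N ∈ 𝒩, i ∈ N → ∀ x : X,
        vi x = ((N.card : ℝ) + 1) * p N i x - ∑ j ∈ N, p N j x := by
      intro i
      by_cases hi : ∃ N ∈ 𝒩, i ∈ N
      · obtain ⟨N0, hN0, hiN0⟩ := hi
        refine ⟨fun x => ((N0.card : ℝ) + 1) * p N0 i x - ∑ j ∈ N0, p N0 j x,
          hW1 N0 hN0 i hiN0, ?_⟩
        intro N hN hiN x
        exact hwd N0 hN0 N hN i hiN0 hiN x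
      · push_neg at hi
        refine ⟨fun _ => (Fintype.card X : ℝ)⁻¹, ⟨fun x => by positivity, ?_⟩,
          fun N hN hiN x => absurd hiN (hi N hN)⟩
        have hXc : ((Fintype.card X : ℝ)) ≠ 0 := by
          have : 0 < Fintype.card X := by omega
          exact_mod_cast this.ne'
        simp only [Finset.sum_const, Finset.card_univ, nsmul_eq_mul]
        rw [mul_inv_cancel₀ hXc]
    choose v hvS hvE using hex
    refine ⟨v, hvS, ?_⟩
    intro N hN i hi
    funext x
    simp only [Pi.add_apply, Pi.smul_apply, Finset.sum_apply, smul_eq_mul]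
    have hvx := hvE i N hN hi x
    have hnn : ((N.card : ℝ)) ≠ 0 := Nat.cast_ne_zero.mpr (h𝒩' N hN).card_pos.ne'
    rw [← Finset.mul_sum, Finset.sum_erase_eq_sub hi, hvx]
    field_simp
    ring
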